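/- In Blocksworld with features H and n(x), the policy π given by rules {¬H, n(x)>0 → ⟨¬H,n(x)>0; H,n(x)↓⟩} and {H, n(x)>0 → ⟨H; ¬H⟩}, where the second abstract action is instantiated only by actions that do not place a block above x, solves every clear(x) instance in which the gripper is initially empty: every trajectory induced by π terminates in a state where n(x) = 0, after at most 2·n(x)(s₀) steps. -/
import Mathlib


inductive Loc (B : Type)
  | table
  | on (b : B)
  | held
deriving DecidableEq

/-- A Blocksworld state: the location of each block (table, on a block, or held). -/
abbrev BWState (B : Type) := B → Loc B

/-- Block `a` is (strictly) above block `x`. -/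
def Above {B : Type} (s : BWState B) (a x : B) : Prop :=
  Relation.TransGen (fun u v => s u = Loc.on v) a x

/-- n(x): number of blocks above x. -/
noncomputable def nAbove {B : Type} (s : BWState B) (x : B) : ℕ :=
  {b | Above s b x}.ncard

/-- H: some block is held by the gripper. -/
def Held {B : Type} (s : BWState B) : Prop := ∃ b, s b = Loc.held

inductive BWAct (B : Type)
  | unstack (a c : B)
  | pickup (a : B)
  | putdown (a : B)
  | stack (a c : B)

def clearTop {B : Type} (s : BWState B) (a : B) : Prop := ∀ c, s c ≠ Loc.on a

def bwApp {B : Type} (s : BWState B) : BWAct B → Prop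
  | .unstack a c => s a = Loc.on c ∧ clearTop s a ∧ ¬ Held s
  | .pickup a => s a = Loc.table ∧ clearTop s a ∧ ¬ Held s
  | .putdown a => s a = Loc.held
  | .stack a c => s a = Loc.held ∧ clearTop s c ∧ a ≠ c

def bwSucc {B : Type} [DecidableEq B] (s : BWState B) : BWAct B → BWState B
  | .unstack a _ => Function.update s a Loc.held
  | .pickup a => Function.update s a Loc.held
  | .putdown a => Function.update s a Loc.table
  | .stack a c => Function.update s a (Loc.on c)

/-- Initial states: gripper empty, blocks form towers (the `on` relation is acyclic). -/
def InitBW {B : Type} (s : BWState B) : Prop := ¬ Held s ∧ ∀ b, ¬ Above s b b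

def ReachBW {B : Type} [DecidableEq B] (s : BWState B) : Prop :=
  ∃ s₀, InitBW s₀ ∧
    Relation.ReflTransGen (fun u v => ∃ a, bwApp u a ∧ v = bwSucc u a) s₀ s

/-- The policy that, while n(x)>0, unstacks the topmost block above x
when the gripper is empty (decreasing n(x) by 1 and making H true) and otherwise puts
the held block away, not above x (making H false and leaving n(x) unchanged), solves
every clear(x) instance with the gripper initially empty: every induced trajectory
reaches n(x) = 0 after at most 2·n(x)(s₀) steps. -/
theorem stmt14 {B : Type} [DecidableEq B] [Fintype B] (x : B)
    (s : ℕ → BWState B) (h0 : InitBW (s 0))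
    (hstep : ∀ i, 0 < nAbove (s i) x →
      ∃ act, bwApp (s i) act ∧ s (i+1) = bwSucc (s i) act ∧
        (¬ Held (s i) →
          Held (s (i+1)) ∧ nAbove (s (i+1)) x + 1 = nAbove (s i) x) ∧
        (Held (s i) →
          ¬ Held (s (i+1)) ∧ nAbove (s (i+1)) x = nAbove (s i) x))
    (hstop : ∀ i, nAbove (s i) x = 0 → s (i+1) = s i) :
    ∃ N ≤ 2 * nAbove (s 0) x, nAbove (s N) x = 0 := by
  classical
  set m : ℕ → ℕ := fun i => 2 * nAbove (s i) x + (if Held (s i) then 1 else 0) with hm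
  have key : ∀ i, 0 < nAbove (s i) x → m (i+1) + 1 = m i := by
    intro i hi
    obtain ⟨act, -, -, h1, h2⟩ := hstep i hi
    by_cases h : Held (s i)
    · obtain ⟨hnh, hn⟩ := h2 h
      simp only [hm, if_pos h, if_neg hnh, hn]
    · obtain ⟨hh, hn⟩ := h1 h
      simp only [hm, if_pos hh, if_neg h]
      omega
  have claim : ∀ k, (∀ i < k, 0 < nAbove (s i) x) → m k + k = m 0 := by
    intro k
    induction k with
    | zero => intro _; rfl
    | succ n ih =>
      intro hall
      have h1 := key n (hall n (by omega))
      have h2 := ih (fun i hi => hall i (by omega))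
      omega
  by_cases hex : ∃ i < 2 * nAbove (s 0) x, nAbove (s i) x = 0
  · obtain ⟨i, hi, hz⟩ := hex
    exact ⟨i, le_of_lt hi, hz⟩
  · push_neg at hex
    have hall : ∀ i < 2 * nAbove (s 0) x, 0 < nAbove (s i) x := by
      intro i hi; exact Nat.pos_of_ne_zero (hex i hi)
    have hc := claim (2 * nAbove (s 0) x) hall
    have hm0 : m 0 = 2 * nAbove (s 0) x := by
      simp only [hm, if_neg h0.1, add_zero]
    refine ⟨2 * nAbove (s 0) x, le_refl _, ?_⟩
    have : m (2 * nAbove (s 0) x) = 0 := by omega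
    simp only [hm] at this
    omega
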